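/- arXiv:1606.07208 — 2 statements merged into one kernel-verified Lean document; each statement's English description precedes it below -/
import Mathlib

section
/- Let P be a dynamic path instance, let α ≥ 0 be a real number, let 0 ≤ i ≤ n, and let k ≥ 2 be an integer. Let j* = max{ j : i ≤ j ≤ n and Θ¹(P_{i,j}) ≤ α } (this maximum exists since Θ¹(P_{i,i}) = 0 ≤ α). Then Θᵏ(P_{i,n}) ≤ α if and only if either j* = n or Θ^{k−1}(P_{j*+1,n}) ≤ α. -/
/-- A dynamic path instance: `n+1` vertices at strictly increasing coordinates
`x 0 < x 1 < ⋯ < x n`, natural-number weights `w i`, positive integer capacities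
`c j` (capacity of the edge from `x (j-1)` to `x j`, for `1 ≤ j ≤ n`), and a
positive travel time `τ` per unit distance. -/
structure DPath where
  n : ℕ
  x : ℕ → ℝ
  w : ℕ → ℕ
  c : ℕ → ℕ
  τ : ℝ
  hx : ∀ i, i < n → x i < x (i + 1)
  hc : ∀ j, 1 ≤ j → j ≤ n → 0 < c j
  hτ : 0 < τ

/-- `P.W a i = w_a + ⋯ + w_i`. -/
def DPath.W (P : DPath) (a i : ℕ) : ℕ := ∑ j ∈ Finset.Icc a i, P.w j

/-- For a sink at `y` in subpath `P_{a,b}`: the minimum capacity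
`min_{i+1 ≤ j ≤ k+1} c_j`, where `k` is the index with `x_k < y ≤ x_{k+1}`;
the edges `j` with `i+1 ≤ j ≤ k+1` are exactly those with `i+1 ≤ j ≤ b` and
`x (j-1) < y`. -/
noncomputable def DPath.cL (P : DPath) (b : ℕ) (y : ℝ) (i : ℕ) : ℕ :=
  sInf (P.c '' {j | i + 1 ≤ j ∧ j ≤ b ∧ P.x (j - 1) < y})

/-- For a sink at `y` in subpath `P_{a,b}`: the minimum capacity
`min_{k+1 ≤ j ≤ i} c_j`, where `k` is the index with `x_k ≤ y < x_{k+1}`;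
the edges `j` with `k+1 ≤ j ≤ i` are exactly those with `a+1 ≤ j ≤ i` and
`y < x j`. -/
noncomputable def DPath.cR (P : DPath) (a : ℕ) (y : ℝ) (i : ℕ) : ℕ :=
  sInf (P.c '' {j | a + 1 ≤ j ∧ j ≤ i ∧ y < P.x j})

/-- Left evacuation time `Θ_L(P_{a,b}, y)`: the maximum, over indices `i` with
`a ≤ i ≤ b`, `x i < y` and `W_{a,i} ≥ 1`, of
`(y − x_i)·τ + ⌈W_{a,i} / min_{i+1 ≤ j ≤ k+1} c_j⌉ − 1`; it is `0` if no such
index exists. -/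
noncomputable def ThetaL (P : DPath) (a b : ℕ) (y : ℝ) : ℝ :=
  sSup (insert 0 {t : ℝ | ∃ i, a ≤ i ∧ i ≤ b ∧ P.x i < y ∧ 1 ≤ P.W a i ∧
    t = (y - P.x i) * P.τ + (⌈(P.W a i : ℝ) / (P.cL b y i : ℝ)⌉ : ℝ) - 1})

/-- Right evacuation time `Θ_R(P_{a,b}, y)`. -/
noncomputable def ThetaR (P : DPath) (a b : ℕ) (y : ℝ) : ℝ :=
  sSup (insert 0 {t : ℝ | ∃ i, a ≤ i ∧ i ≤ b ∧ y < P.x i ∧ 1 ≤ P.W i b ∧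
    t = (P.x i - y) * P.τ + (⌈(P.W i b : ℝ) / (P.cR a y i : ℝ)⌉ : ℝ) - 1})

/-- Evacuation time of subpath `P_{a,b}` to sink `y`. -/
noncomputable def Theta (P : DPath) (a b : ℕ) (y : ℝ) : ℝ :=
  max (ThetaL P a b y) (ThetaR P a b y)

/-- `Θ¹(P_{a,b})`: minimum 1-sink evacuation time of subpath `P_{a,b}`
over sinks `y ∈ [x_a, x_b]`. -/
noncomputable def Theta1 (P : DPath) (a b : ℕ) : ℝ :=
  sInf (Theta P a b '' Set.Icc (P.x a) (P.x b))

/-- `Θᵏ(P_{a,b})`: minimum over all partitions of `{a, …, b}` into at most `k`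
nonempty intervals `[f j, f (j+1) - 1]`, of the maximum over the intervals of
`Θ¹`. -/
noncomputable def ThetaK (P : DPath) (k a b : ℕ) : ℝ :=
  sInf {t : ℝ | ∃ (m : ℕ) (f : ℕ → ℕ), 1 ≤ m ∧ m ≤ k ∧
    f 0 = a ∧ f m = b + 1 ∧ (∀ j, j < m → f j < f (j + 1)) ∧
    t = ⨆ j : Fin m, Theta1 P (f j.val) (f (j.val + 1) - 1)}


namespace Stmt12Aux

lemma x_mono (P : DPath) {i j : ℕ} (hij : i ≤ j) : j ≤ P.n → P.x i ≤ P.x j := by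
  induction hij with
  | refl => intro _; exact le_rfl
  | @step m h ih =>
    intro hj
    exact le_trans (ih (by omega)) (le_of_lt (P.hx m (by omega)))

lemma bddL (P : DPath) (a b : ℕ) (y : ℝ) :
    BddAbove (insert (0:ℝ) {t : ℝ | ∃ i, a ≤ i ∧ i ≤ b ∧ P.x i < y ∧ 1 ≤ P.W a i ∧
      t = (y - P.x i) * P.τ + (⌈(P.W a i : ℝ) / (P.cL b y i : ℝ)⌉ : ℝ) - 1}) := by
  apply Set.Finite.bddAbove
  apply Set.Finite.insert
  apply Set.Finite.subset ((Set.finite_Icc a b).image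
    (fun i => (y - P.x i) * P.τ + (⌈(P.W a i : ℝ) / (P.cL b y i : ℝ)⌉ : ℝ) - 1))
  rintro t ⟨i, h1, h2, _, _, rfl⟩
  exact ⟨i, Set.mem_Icc.mpr ⟨h1, h2⟩, rfl⟩

lemma bddR (P : DPath) (a b : ℕ) (y : ℝ) :
    BddAbove (insert (0:ℝ) {t : ℝ | ∃ i, a ≤ i ∧ i ≤ b ∧ y < P.x i ∧ 1 ≤ P.W i b ∧
      t = (P.x i - y) * P.τ + (⌈(P.W i b : ℝ) / (P.cR a y i : ℝ)⌉ : ℝ) - 1}) := by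
  apply Set.Finite.bddAbove
  apply Set.Finite.insert
  apply Set.Finite.subset ((Set.finite_Icc a b).image
    (fun i => (P.x i - y) * P.τ + (⌈(P.W i b : ℝ) / (P.cR a y i : ℝ)⌉ : ℝ) - 1))
  rintro t ⟨i, h1, h2, _, _, rfl⟩
  exact ⟨i, Set.mem_Icc.mpr ⟨h1, h2⟩, rfl⟩

lemma thetaL_nonneg (P : DPath) (a b : ℕ) (y : ℝ) : 0 ≤ ThetaL P a b y :=
  le_csSup (bddL P a b y) (Set.mem_insert _ _)

lemma theta_nonneg (P : DPath) (a b : ℕ) (y : ℝ) : 0 ≤ Theta P a b y :=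
  le_trans (thetaL_nonneg P a b y) (le_max_left _ _)

lemma le_thetaL (P : DPath) {a b i : ℕ} {y : ℝ} (h1 : a ≤ i) (h2 : i ≤ b)
    (h3 : P.x i < y) (h4 : 1 ≤ P.W a i) :
    (y - P.x i) * P.τ + (⌈(P.W a i : ℝ) / (P.cL b y i : ℝ)⌉ : ℝ) - 1 ≤ ThetaL P a b y :=
  le_csSup (bddL P a b y) (Set.mem_insert_of_mem _ ⟨i, h1, h2, h3, h4, rfl⟩)

lemma le_thetaR (P : DPath) {a b i : ℕ} {y : ℝ} (h1 : a ≤ i) (h2 : i ≤ b)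
    (h3 : y < P.x i) (h4 : 1 ≤ P.W i b) :
    (P.x i - y) * P.τ + (⌈(P.W i b : ℝ) / (P.cR a y i : ℝ)⌉ : ℝ) - 1 ≤ ThetaR P a b y :=
  le_csSup (bddR P a b y) (Set.mem_insert_of_mem _ ⟨i, h1, h2, h3, h4, rfl⟩)

lemma thetaL_le (P : DPath) {a b : ℕ} {y v : ℝ} (hv : 0 ≤ v)
    (h : ∀ i, a ≤ i → i ≤ b → P.x i < y → 1 ≤ P.W a i →
      (y - P.x i) * P.τ + (⌈(P.W a i : ℝ) / (P.cL b y i : ℝ)⌉ : ℝ) - 1 ≤ v) :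
    ThetaL P a b y ≤ v := by
  apply csSup_le ⟨0, Set.mem_insert _ _⟩
  intro t ht
  rcases Set.mem_insert_iff.mp ht with rfl | ⟨i, h1, h2, h3, h4, rfl⟩
  · exact hv
  · exact h i h1 h2 h3 h4

lemma thetaR_le (P : DPath) {a b : ℕ} {y v : ℝ} (hv : 0 ≤ v)
    (h : ∀ i, a ≤ i → i ≤ b → y < P.x i → 1 ≤ P.W i b →
      (P.x i - y) * P.τ + (⌈(P.W i b : ℝ) / (P.cR a y i : ℝ)⌉ : ℝ) - 1 ≤ v) :
    ThetaR P a b y ≤ v := by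
  apply csSup_le ⟨0, Set.mem_insert _ _⟩
  intro t ht
  rcases Set.mem_insert_iff.mp ht with rfl | ⟨i, h1, h2, h3, h4, rfl⟩
  · exact hv
  · exact h i h1 h2 h3 h4

lemma cR_facts (P : DPath) {a a' i : ℕ} {y y' : ℝ} (h1 : a ≤ a') (hyy' : y ≤ y')
    (hi : a' + 1 ≤ i) (hin : i ≤ P.n) (hxi : y' < P.x i) :
    P.cR a y i ≤ P.cR a' y' i ∧ 0 < P.cR a y i := by
  have hTS : {j | a' + 1 ≤ j ∧ j ≤ i ∧ y' < P.x j} ⊆ {j | a + 1 ≤ j ∧ j ≤ i ∧ y < P.x j} := by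
    rintro j ⟨ha, hb', hc'⟩
    exact ⟨by omega, hb', lt_of_le_of_lt hyy' hc'⟩
  have hTne : i ∈ {j | a' + 1 ≤ j ∧ j ≤ i ∧ y' < P.x j} := ⟨hi, le_rfl, hxi⟩
  constructor
  · unfold DPath.cR
    obtain ⟨j, hj, hjeq⟩ := Nat.sInf_mem (⟨P.c i, ⟨i, hTne, rfl⟩⟩ :
      (P.c '' {j | a' + 1 ≤ j ∧ j ≤ i ∧ y' < P.x j}).Nonempty)
    rw [← hjeq]
    exact Nat.sInf_le ⟨j, hTS hj, rfl⟩
  · unfold DPath.cR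
    obtain ⟨j, hj, hjeq⟩ := Nat.sInf_mem (⟨P.c i, ⟨i, hTS hTne, rfl⟩⟩ :
      (P.c '' {j | a + 1 ≤ j ∧ j ≤ i ∧ y < P.x j}).Nonempty)
    obtain ⟨hj1, hj2, _⟩ := hj
    rw [← hjeq]
    exact P.hc j (by omega) (by omega)

lemma theta_shrink (P : DPath) {a a' b : ℕ} (h1 : a ≤ a') (h2 : a' ≤ b) (hb : b ≤ P.n)
    {y : ℝ} : Theta P a' b (max y (P.x a')) ≤ Theta P a b y := by
  have hτ := P.hτ
  rcases le_or_gt (P.x a') y with hc | hc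
  · rw [max_eq_left hc]
    apply max_le
    · apply thetaL_le P (theta_nonneg P a b y)
      intro i hi1 hi2 hxi hW
      have hWle : P.W a' i ≤ P.W a i :=
        Finset.sum_le_sum_of_subset (Finset.Icc_subset_Icc_left h1)
      have hceil : (⌈(P.W a' i : ℝ) / (P.cL b y i : ℝ)⌉ : ℝ) ≤
          (⌈(P.W a i : ℝ) / (P.cL b y i : ℝ)⌉ : ℝ) := by
        apply Int.cast_le.mpr
        apply Int.ceil_le_ceil
        rcases eq_or_lt_of_le (Nat.cast_nonneg (α := ℝ) (P.cL b y i)) with hd | hd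
        · rw [← hd]; simp
        · exact (div_le_div_iff_of_pos_right hd).mpr (Nat.cast_le.mpr hWle)
      refine le_trans ?_ (le_trans (le_thetaL P (le_trans h1 hi1) hi2 hxi (le_trans hW hWle))
        (le_max_left _ _))
      linarith
    · apply thetaR_le P (theta_nonneg P a b y)
      intro i hi1 hi2 hxi hW
      have hxa' : P.x a' < P.x i := lt_of_le_of_lt hc hxi
      have hia' : a' + 1 ≤ i := by
        by_contra hcon
        exact absurd hxa' (not_lt.mpr (x_mono P (by omega : i ≤ a') (le_trans h2 hb)))
      obtain ⟨hcle, hcpos⟩ := cR_facts P h1 (le_refl y) hia' (le_trans hi2 hb) hxi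
      have hceil : (⌈(P.W i b : ℝ) / (P.cR a' y i : ℝ)⌉ : ℝ) ≤
          (⌈(P.W i b : ℝ) / (P.cR a y i : ℝ)⌉ : ℝ) := by
        apply Int.cast_le.mpr
        apply Int.ceil_le_ceil
        exact div_le_div_of_nonneg_left (Nat.cast_nonneg _) (by exact_mod_cast hcpos)
          (by exact_mod_cast hcle)
      refine le_trans ?_ (le_trans (le_thetaR P (le_trans h1 hi1) hi2 hxi hW)
        (le_max_right _ _))
      linarith
  · rw [max_eq_right hc.le]
    apply max_le
    · apply thetaL_le P (theta_nonneg P a b y)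
      intro i hi1 hi2 hxi _
      exact absurd (x_mono P hi1 (le_trans hi2 hb)) (not_le.mpr hxi)
    · apply thetaR_le P (theta_nonneg P a b y)
      intro i hi1 hi2 hxi hW
      have hia' : a' + 1 ≤ i := by
        by_contra hcon
        exact absurd hxi (not_lt.mpr (x_mono P (by omega : i ≤ a') (le_trans h2 hb)))
      obtain ⟨hcle, hcpos⟩ := cR_facts P h1 hc.le hia' (le_trans hi2 hb) hxi
      have hceil : (⌈(P.W i b : ℝ) / (P.cR a' (P.x a') i : ℝ)⌉ : ℝ) ≤
          (⌈(P.W i b : ℝ) / (P.cR a y i : ℝ)⌉ : ℝ) := by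
        apply Int.cast_le.mpr
        apply Int.ceil_le_ceil
        exact div_le_div_of_nonneg_left (Nat.cast_nonneg _) (by exact_mod_cast hcpos)
          (by exact_mod_cast hcle)
      have hdist : (P.x i - P.x a') * P.τ ≤ (P.x i - y) * P.τ := by
        apply mul_le_mul_of_nonneg_right (by linarith) hτ.le
      refine le_trans ?_ (le_trans (le_thetaR P (le_trans h1 hi1) hi2
        (lt_of_le_of_lt hc.le hxi) hW) (le_max_right _ _))
      linarith

lemma theta1_nonneg (P : DPath) (a b : ℕ) : 0 ≤ Theta1 P a b := by
  apply Real.sInf_nonneg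
  rintro t ⟨y, _, rfl⟩
  exact theta_nonneg P a b y

lemma theta1_mono (P : DPath) {a a' b : ℕ} (h1 : a ≤ a') (h2 : a' ≤ b) (hb : b ≤ P.n) :
    Theta1 P a' b ≤ Theta1 P a b := by
  unfold Theta1
  apply le_csInf
  · exact ⟨Theta P a b (P.x a),
      ⟨P.x a, Set.mem_Icc.mpr ⟨le_rfl, x_mono P (le_trans h1 h2) hb⟩, rfl⟩⟩
  rintro t ⟨y, hy, rfl⟩
  obtain ⟨hy1, hy2⟩ := Set.mem_Icc.mp hy
  have hmem : Theta P a' b (max y (P.x a')) ∈ Theta P a' b '' Set.Icc (P.x a') (P.x b) :=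
    ⟨max y (P.x a'), Set.mem_Icc.mpr ⟨le_max_right _ _, max_le hy2 (x_mono P h2 hb)⟩, rfl⟩
  have hbdd : BddBelow (Theta P a' b '' Set.Icc (P.x a') (P.x b)) := by
    refine ⟨0, ?_⟩
    rintro s ⟨z, _, rfl⟩
    exact theta_nonneg P a' b z
  exact le_trans (csInf_le hbdd hmem) (theta_shrink P h1 h2 hb)

lemma f_mono {f : ℕ → ℕ} {m : ℕ} (h : ∀ j, j < m → f j < f (j + 1)) :
    ∀ {j j' : ℕ}, j ≤ j' → j' ≤ m → f j ≤ f j' := by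
  intro j j' hjj'
  induction hjj' with
  | refl => intro _; exact le_rfl
  | @step m' hm ih =>
    intro hj'm
    exact le_trans (ih (by omega)) (le_of_lt (h m' (by omega)))

lemma thetaK_le (P : DPath) {k a b : ℕ} {α : ℝ} (hα : 0 ≤ α) (m : ℕ) (f : ℕ → ℕ)
    (hm1 : 1 ≤ m) (hmk : m ≤ k) (hf0 : f 0 = a) (hfm : f m = b + 1)
    (hinc : ∀ j, j < m → f j < f (j + 1))
    (hbd : ∀ j, j < m → Theta1 P (f j) (f (j + 1) - 1) ≤ α) :
    ThetaK P k a b ≤ α := by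
  unfold ThetaK
  refine csInf_le_of_le ⟨0, ?_⟩ ⟨m, f, hm1, hmk, hf0, hfm, hinc, rfl⟩
    (Real.iSup_le (fun j => hbd j.val j.isLt) hα)
  rintro t ⟨m', f', _, _, _, _, _, rfl⟩
  exact Real.iSup_nonneg (fun j => theta1_nonneg P _ _)

lemma thetaK_finite (P : DPath) (k a b : ℕ) :
    {t : ℝ | ∃ (m : ℕ) (f : ℕ → ℕ), 1 ≤ m ∧ m ≤ k ∧
      f 0 = a ∧ f m = b + 1 ∧ (∀ j, j < m → f j < f (j + 1)) ∧
      t = ⨆ j : Fin m, Theta1 P (f j.val) (f (j.val + 1) - 1)}.Finite := by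
  apply Set.Finite.subset (Set.finite_range
    (fun p : Fin (k + 1) × (Fin (k + 1) → Fin (b + 2)) =>
      ⨆ j : Fin p.1.val, Theta1 P ((p.2 (Fin.castLE (le_of_lt p.1.isLt) j)).val)
        (((p.2 (Fin.castLE p.1.isLt j.succ)).val) - 1)))
  rintro t ⟨m, f, hm1, hmk, hf0, hfm, hinc, rfl⟩
  have hfle : ∀ j, j ≤ m → f j ≤ b + 1 := fun j hj => hfm ▸ f_mono hinc hj le_rfl
  refine ⟨(⟨m, by omega⟩, fun j => ⟨min (f j.val) (b + 1), by omega⟩), ?_⟩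
  show (⨆ j : Fin m, _) = _
  apply iSup_congr
  intro j
  have hj1 : j.val ≤ m := le_of_lt j.isLt
  have hj2 : j.val + 1 ≤ m := j.isLt
  simp only [Fin.coe_castLE, Fin.val_succ]
  rw [min_eq_left (hfle _ hj1), min_eq_left (hfle _ hj2)]

lemma thetaK_extract (P : DPath) {k a b : ℕ} {α : ℝ} (hk : 1 ≤ k) (hab : a ≤ b)
    (h : ThetaK P k a b ≤ α) :
    ∃ (m : ℕ) (f : ℕ → ℕ), 1 ≤ m ∧ m ≤ k ∧ f 0 = a ∧ f m = b + 1 ∧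
      (∀ j, j < m → f j < f (j + 1)) ∧ ∀ j, j < m → Theta1 P (f j) (f (j + 1) - 1) ≤ α := by
  set S := {t : ℝ | ∃ (m : ℕ) (f : ℕ → ℕ), 1 ≤ m ∧ m ≤ k ∧
      f 0 = a ∧ f m = b + 1 ∧ (∀ j, j < m → f j < f (j + 1)) ∧
      t = ⨆ j : Fin m, Theta1 P (f j.val) (f (j.val + 1) - 1)} with hS
  have hne : S.Nonempty := by
    refine ⟨_, 1, fun j => if j = 0 then a else b + 1, le_rfl, hk, rfl, rfl, ?_, rfl⟩
    intro j hj
    have : j = 0 := by omega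
    subst this
    show (if (0:ℕ) = 0 then a else b + 1) < (if (0 + 1 : ℕ) = 0 then a else b + 1)
    rw [if_pos rfl, if_neg (by omega : ¬ ((0:ℕ) + 1 = 0))]
    omega
  have hmem : sInf S ∈ S := hne.csInf_mem (thetaK_finite P k a b)
  obtain ⟨m, f, hm1, hmk, hf0, hfm, hinc, ht⟩ := hmem
  have hle : sInf S ≤ α := h
  refine ⟨m, f, hm1, hmk, hf0, hfm, hinc, ?_⟩
  intro j hj
  have hle2 : Theta1 P (f j) (f (j + 1) - 1) ≤
      ⨆ j : Fin m, Theta1 P (f j.val) (f (j.val + 1) - 1) :=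
    le_ciSup (f := fun j : Fin m => Theta1 P (f j.val) (f (j.val + 1) - 1))
      (Set.finite_range _).bddAbove (⟨j, hj⟩ : Fin m)
  rw [← ht] at hle2
  exact le_trans hle2 hle

end Stmt12Aux

open Stmt12Aux

/-- with `j* = max { j : i ≤ j ≤ n, Θ¹(P_{i,j}) ≤ α }`, one has
`Θᵏ(P_{i,n}) ≤ α` iff `j* = n` or `Θ^{k−1}(P_{j*+1,n}) ≤ α`. -/
theorem stmt12 (P : DPath) (α : ℝ) (hα : 0 ≤ α) (i : ℕ) (hi : i ≤ P.n)
    (k : ℕ) (hk : 2 ≤ k) (js : ℕ)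
    (hjs : i ≤ js ∧ js ≤ P.n ∧ Theta1 P i js ≤ α)
    (hjsmax : ∀ j, i ≤ j → j ≤ P.n → Theta1 P i j ≤ α → j ≤ js) :
    ThetaK P k i P.n ≤ α ↔ (js = P.n ∨ ThetaK P (k - 1) (js + 1) P.n ≤ α) := by
  obtain ⟨hijs, hjsn, hth⟩ := hjs
  constructor
  · intro h
    obtain ⟨m, f, hm1, hmk, hf0, hfm, hinc, hbd⟩ := thetaK_extract P (by omega) hi h
    have hf1 : i < f 1 := hf0 ▸ hinc 0 hm1
    have hf1m : f 1 ≤ P.n + 1 := hfm ▸ f_mono hinc hm1 le_rfl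
    have hfirst : Theta1 P i (f 1 - 1) ≤ α := by
      have := hbd 0 hm1; rwa [hf0] at this
    have hf1js : f 1 ≤ js + 1 := by
      have := hjsmax (f 1 - 1) (by omega) (by omega) hfirst
      omega
    by_cases hjn : js = P.n
    · exact Or.inl hjn
    · right
      have hjslt : js < P.n := lt_of_le_of_ne hjsn hjn
      have hp1 : 1 ≤ Nat.findGreatest (fun j => f j ≤ js + 1) m :=
        Nat.le_findGreatest hm1 hf1js
      have hpm : Nat.findGreatest (fun j => f j ≤ js + 1) m ≤ m := Nat.findGreatest_le m
      have hfp : f (Nat.findGreatest (fun j => f j ≤ js + 1) m) ≤ js + 1 :=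
        Nat.findGreatest_spec (P := fun j => f j ≤ js + 1) hm1 hf1js
      set p := Nat.findGreatest (fun j => f j ≤ js + 1) m with hpdef
      have hplt : p < m := by
        rcases eq_or_lt_of_le hpm with he | hlt
        · exfalso; rw [he, hfm] at hfp; omega
        · exact hlt
      have hfp1 : js + 1 < f (p + 1) := by
        have h2 : ¬ (f (p + 1) ≤ js + 1) :=
          Nat.findGreatest_is_greatest (P := fun j => f j ≤ js + 1) (n := m) (by omega) (by omega)
        omega
      have hfp1n : f (p + 1) ≤ P.n + 1 := hfm ▸ f_mono hinc (by omega) le_rfl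
      apply thetaK_le P hα (m - p) (fun j => if j = 0 then js + 1 else f (p + j))
        (by omega) (by omega) (if_pos rfl) ?_ ?_ ?_
      · show (if m - p = 0 then js + 1 else f (p + (m - p))) = P.n + 1
        rw [if_neg (by omega : ¬ (m - p = 0)), show p + (m - p) = m by omega, hfm]
      · intro j hj
        show (if j = 0 then js + 1 else f (p + j)) <
          (if j + 1 = 0 then js + 1 else f (p + (j + 1)))
        rw [if_neg (by omega : ¬ (j + 1 = 0))]
        by_cases hj0 : j = 0
        · subst hj0
          rw [if_pos rfl]
          exact hfp1
        · rw [if_neg hj0, show p + (j + 1) = (p + j) + 1 by omega]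
          exact hinc (p + j) (by omega)
      · intro j hj
        show Theta1 P (if j = 0 then js + 1 else f (p + j))
          ((if j + 1 = 0 then js + 1 else f (p + (j + 1))) - 1) ≤ α
        rw [if_neg (by omega : ¬ (j + 1 = 0))]
        by_cases hj0 : j = 0
        · subst hj0
          rw [if_pos rfl, show p + (0 + 1) = p + 1 by omega]
          exact le_trans (theta1_mono P hfp (by omega) (by omega)) (hbd p hplt)
        · rw [if_neg hj0, show p + (j + 1) = (p + j) + 1 by omega]
          exact hbd (p + j) (by omega)
  · intro h
    by_cases hjn : js = P.n
    · subst hjn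
      apply thetaK_le P hα 1 (fun j => if j = 0 then i else P.n + 1)
        le_rfl (by omega) (if_pos rfl) (if_neg one_ne_zero) ?_ ?_
      · intro j hj
        have : j = 0 := by omega
        subst this
        show (if (0:ℕ) = 0 then i else P.n + 1) < (if (0 + 1 : ℕ) = 0 then i else P.n + 1)
        rw [if_pos rfl, if_neg (by omega : ¬ ((0:ℕ) + 1 = 0))]
        omega
      · intro j hj
        have : j = 0 := by omega
        subst this
        show Theta1 P (if (0:ℕ) = 0 then i else P.n + 1)
          ((if (0 + 1 : ℕ) = 0 then i else P.n + 1) - 1) ≤ α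
        rw [if_pos rfl, if_neg (by omega : ¬ ((0:ℕ) + 1 = 0)), Nat.add_sub_cancel]
        exact hth
    · rcases h with h | h
      · exact absurd h hjn
      have hjslt : js < P.n := lt_of_le_of_ne hjsn hjn
      obtain ⟨m, f, hm1, hmk, hf0, hfm, hinc, hbd⟩ :=
        thetaK_extract P (by omega) (by omega) h
      apply thetaK_le P hα (m + 1) (fun j => if j = 0 then i else f (j - 1))
        (by omega) (by omega) (if_pos rfl) ?_ ?_ ?_
      · show (if m + 1 = 0 then i else f (m + 1 - 1)) = P.n + 1
        rw [if_neg (by omega : ¬ (m + 1 = 0)), Nat.add_sub_cancel, hfm]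
      · intro j hj
        show (if j = 0 then i else f (j - 1)) < (if j + 1 = 0 then i else f (j + 1 - 1))
        rw [if_neg (by omega : ¬ (j + 1 = 0)), Nat.add_sub_cancel]
        by_cases hj0 : j = 0
        · subst hj0
          rw [if_pos rfl, hf0]
          omega
        · rw [if_neg hj0]
          have := hinc (j - 1) (by omega)
          rwa [show j - 1 + 1 = j by omega] at this
      · intro j hj
        show Theta1 P (if j = 0 then i else f (j - 1))
          ((if j + 1 = 0 then i else f (j + 1 - 1)) - 1) ≤ α
        rw [if_neg (by omega : ¬ (j + 1 = 0)), Nat.add_sub_cancel]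
        by_cases hj0 : j = 0
        · subst hj0
          rw [if_pos rfl, hf0, Nat.add_sub_cancel]
          exact hth
        · rw [if_neg hj0]
          have := hbd (j - 1) (by omega)
          rwa [show j - 1 + 1 = j by omega] at this
end

section
/- Let P be a dynamic path instance, let α ≥ 0 be a real number, and let 0 ≤ i ≤ n. The set { x ∈ [x_i, x_n] : Θ_L(P_{i,n}, x) ≤ α } contains x_i and has a maximum element; call it x*. Assume the set J = { j : i ≤ j ≤ n, x* ≤ x_j, and Θ_R(P_{i,j}, x*) ≤ α } is nonempty, and let j* = max J. Then j* = max{ j : i ≤ j ≤ n and Θ¹(P_{i,j}) ≤ α }, and moreover Θ(P_{i,j*}, x*) ≤ α. -/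
section AuxStmt13

/-- Strict monotonicity of coordinates on `[0, n]`. -/
lemma DPath.x_lt (P : DPath) : ∀ k, k ≤ P.n → ∀ j, j < k → P.x j < P.x k := by
  intro k
  induction k with
  | zero => intro _ j hj; omega
  | succ m ih =>
    intro hk j hj
    rcases Nat.lt_succ_iff_lt_or_eq.mp hj with h | h
    · exact (ih (by omega) j h).trans (P.hx m (by omega))
    · subst h; exact P.hx j (by omega)

lemma DPath.x_le (P : DPath) {j k : ℕ} (hjk : j ≤ k) (hk : k ≤ P.n) : P.x j ≤ P.x k := by
  rcases eq_or_lt_of_le hjk with rfl | h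
  · exact le_refl _
  · exact le_of_lt (P.x_lt k hk j h)

lemma DPath.lt_of_x_lt (P : DPath) {j k : ℕ} (hj : j ≤ P.n) (hk : k ≤ P.n)
    (h : P.x j < P.x k) : j < k := by
  by_contra hc
  push_neg at hc
  exact absurd (P.x_le hc hj) (not_le.mpr h)

/-! ### Boundedness of the defining sets -/

lemma thetaL_bdd (P : DPath) (a b : ℕ) (y : ℝ) :
    BddAbove (insert 0 {t : ℝ | ∃ i, a ≤ i ∧ i ≤ b ∧ P.x i < y ∧ 1 ≤ P.W a i ∧
      t = (y - P.x i) * P.τ + (⌈(P.W a i : ℝ) / (P.cL b y i : ℝ)⌉ : ℝ) - 1}) := by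
  apply Set.Finite.bddAbove
  apply Set.Finite.insert
  apply Set.Finite.subset ((Set.finite_Icc a b).image
    (fun k => (y - P.x k) * P.τ + (⌈(P.W a k : ℝ) / (P.cL b y k : ℝ)⌉ : ℝ) - 1))
  rintro t ⟨k, h1, h2, _, _, rfl⟩
  exact ⟨k, ⟨h1, h2⟩, rfl⟩

lemma thetaR_bdd (P : DPath) (a b : ℕ) (y : ℝ) :
    BddAbove (insert 0 {t : ℝ | ∃ i, a ≤ i ∧ i ≤ b ∧ y < P.x i ∧ 1 ≤ P.W i b ∧
      t = (P.x i - y) * P.τ + (⌈(P.W i b : ℝ) / (P.cR a y i : ℝ)⌉ : ℝ) - 1}) := by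
  apply Set.Finite.bddAbove
  apply Set.Finite.insert
  apply Set.Finite.subset ((Set.finite_Icc a b).image
    (fun k => (P.x k - y) * P.τ + (⌈(P.W k b : ℝ) / (P.cR a y k : ℝ)⌉ : ℝ) - 1))
  rintro t ⟨k, h1, h2, _, _, rfl⟩
  exact ⟨k, ⟨h1, h2⟩, rfl⟩

lemma thetaL_nonneg (P : DPath) (a b : ℕ) (y : ℝ) : 0 ≤ ThetaL P a b y :=
  le_csSup (thetaL_bdd P a b y) (Set.mem_insert _ _)

lemma thetaR_nonneg (P : DPath) (a b : ℕ) (y : ℝ) : 0 ≤ ThetaR P a b y :=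
  le_csSup (thetaR_bdd P a b y) (Set.mem_insert _ _)

lemma thetaL_le (P : DPath) {a b : ℕ} {y α : ℝ} (hα : 0 ≤ α)
    (h : ∀ k, a ≤ k → k ≤ b → P.x k < y → 1 ≤ P.W a k →
      (y - P.x k) * P.τ + (⌈(P.W a k : ℝ) / (P.cL b y k : ℝ)⌉ : ℝ) - 1 ≤ α) :
    ThetaL P a b y ≤ α := by
  apply csSup_le (Set.insert_nonempty _ _)
  rintro t ht
  rcases Set.mem_insert_iff.mp ht with rfl | ⟨k, h1, h2, h3, h4, rfl⟩
  · exact hα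
  · exact h k h1 h2 h3 h4

lemma thetaR_le (P : DPath) {a b : ℕ} {y α : ℝ} (hα : 0 ≤ α)
    (h : ∀ k, a ≤ k → k ≤ b → y < P.x k → 1 ≤ P.W k b →
      (P.x k - y) * P.τ + (⌈(P.W k b : ℝ) / (P.cR a y k : ℝ)⌉ : ℝ) - 1 ≤ α) :
    ThetaR P a b y ≤ α := by
  apply csSup_le (Set.insert_nonempty _ _)
  rintro t ht
  rcases Set.mem_insert_iff.mp ht with rfl | ⟨k, h1, h2, h3, h4, rfl⟩
  · exact hα
  · exact h k h1 h2 h3 h4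

lemma thetaL_term_le (P : DPath) {a b k : ℕ} {y : ℝ} (h1 : a ≤ k) (h2 : k ≤ b)
    (h3 : P.x k < y) (h4 : 1 ≤ P.W a k) :
    (y - P.x k) * P.τ + (⌈(P.W a k : ℝ) / (P.cL b y k : ℝ)⌉ : ℝ) - 1 ≤ ThetaL P a b y :=
  le_csSup (thetaL_bdd P a b y) (Set.mem_insert_of_mem _ ⟨k, h1, h2, h3, h4, rfl⟩)

lemma thetaR_term_le (P : DPath) {a b k : ℕ} {y : ℝ} (h1 : a ≤ k) (h2 : k ≤ b)
    (h3 : y < P.x k) (h4 : 1 ≤ P.W k b) :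
    (P.x k - y) * P.τ + (⌈(P.W k b : ℝ) / (P.cR a y k : ℝ)⌉ : ℝ) - 1 ≤ ThetaR P a b y :=
  le_csSup (thetaR_bdd P a b y) (Set.mem_insert_of_mem _ ⟨k, h1, h2, h3, h4, rfl⟩)

/-! ### Capacity lemmas -/

lemma ceil_div_le_ceil_div {W c₁ c₂ : ℕ} (h1 : 1 ≤ c₂) (h2 : c₂ ≤ c₁) :
    (⌈(W : ℝ) / (c₁ : ℝ)⌉ : ℝ) ≤ (⌈(W : ℝ) / (c₂ : ℝ)⌉ : ℝ) := by
  have hc2 : (0:ℝ) < (c₂:ℝ) := by exact_mod_cast h1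
  have h : (W : ℝ) / c₁ ≤ (W : ℝ) / c₂ := by
    apply div_le_div_of_nonneg_left (by positivity) hc2 (by exact_mod_cast h2)
  exact_mod_cast Int.ceil_le_ceil h

lemma cL_bounds (P : DPath) {b k : ℕ} {y₁ y₂ : ℝ} (hb : b ≤ P.n) (hkb : k < b)
    (hky : P.x k < y₁) (h12 : y₁ ≤ y₂) :
    1 ≤ P.cL b y₂ k ∧ P.cL b y₂ k ≤ P.cL b y₁ k := by
  have hmem : k + 1 ∈ {j | k + 1 ≤ j ∧ j ≤ b ∧ P.x (j - 1) < y₁} :=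
    ⟨le_refl _, by omega, by simpa using hky⟩
  have hsub : {j | k + 1 ≤ j ∧ j ≤ b ∧ P.x (j - 1) < y₁} ⊆
      {j | k + 1 ≤ j ∧ j ≤ b ∧ P.x (j - 1) < y₂} :=
    fun j ⟨h1, h2, h3⟩ => ⟨h1, h2, h3.trans_le h12⟩
  have hne1 : (P.c '' {j | k + 1 ≤ j ∧ j ≤ b ∧ P.x (j - 1) < y₁}).Nonempty :=
    ⟨P.c (k + 1), Set.mem_image_of_mem _ hmem⟩
  constructor
  · have hne2 : (P.c '' {j | k + 1 ≤ j ∧ j ≤ b ∧ P.x (j - 1) < y₂}).Nonempty :=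
      ⟨P.c (k + 1), Set.mem_image_of_mem _ (hsub hmem)⟩
    obtain ⟨j, ⟨hj1, hj2, _⟩, hje⟩ := Nat.sInf_mem hne2
    rw [DPath.cL, ← hje]
    exact P.hc j (by omega) (hj2.trans hb)
  · have h1 := Nat.sInf_mem hne1
    exact Nat.sInf_le (Set.image_mono hsub h1)

lemma cR_bounds (P : DPath) {a k : ℕ} {y₁ y₂ : ℝ} (hk : k ≤ P.n) (hak : a < k)
    (h12 : y₁ ≤ y₂) (hky : y₂ < P.x k) :
    1 ≤ P.cR a y₁ k ∧ P.cR a y₁ k ≤ P.cR a y₂ k := by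
  have hmem : k ∈ {j | a + 1 ≤ j ∧ j ≤ k ∧ y₂ < P.x j} := ⟨by omega, le_refl _, hky⟩
  have hsub : {j | a + 1 ≤ j ∧ j ≤ k ∧ y₂ < P.x j} ⊆
      {j | a + 1 ≤ j ∧ j ≤ k ∧ y₁ < P.x j} :=
    fun j ⟨h1, h2, h3⟩ => ⟨h1, h2, h12.trans_lt h3⟩
  have hne1 : (P.c '' {j | a + 1 ≤ j ∧ j ≤ k ∧ y₁ < P.x j}).Nonempty :=
    ⟨P.c k, Set.mem_image_of_mem _ (hsub hmem)⟩
  constructor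
  · obtain ⟨j, ⟨hj1, hj2, _⟩, hje⟩ := Nat.sInf_mem hne1
    rw [DPath.cR, ← hje]
    exact P.hc j (by omega) (hj2.trans hk)
  · have h2 := Nat.sInf_mem (⟨P.c k, Set.mem_image_of_mem _ hmem⟩ :
      (P.c '' {j | a + 1 ≤ j ∧ j ≤ k ∧ y₂ < P.x j}).Nonempty)
    exact Nat.sInf_le (Set.image_mono hsub h2)

lemma cL_congr (P : DPath) {b k : ℕ} {y₁ y₂ : ℝ} (hb : b ≤ P.n)
    (hiff : ∀ m, m ≤ P.n → (P.x m < y₁ ↔ P.x m < y₂)) :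
    P.cL b y₁ k = P.cL b y₂ k := by
  have hset : {j | k + 1 ≤ j ∧ j ≤ b ∧ P.x (j - 1) < y₁} =
      {j | k + 1 ≤ j ∧ j ≤ b ∧ P.x (j - 1) < y₂} := by
    ext j
    simp only [Set.mem_setOf_eq]
    constructor
    · rintro ⟨h1, h2, h3⟩; exact ⟨h1, h2, (hiff (j-1) (by omega)).mp h3⟩
    · rintro ⟨h1, h2, h3⟩; exact ⟨h1, h2, (hiff (j-1) (by omega)).mpr h3⟩
  rw [DPath.cL, hset, DPath.cL]

lemma cR_congr (P : DPath) {a k : ℕ} {y₁ y₂ : ℝ} (hk : k ≤ P.n)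
    (hiff : ∀ m, m ≤ P.n → (y₁ < P.x m ↔ y₂ < P.x m)) :
    P.cR a y₁ k = P.cR a y₂ k := by
  have hset : {j | a + 1 ≤ j ∧ j ≤ k ∧ y₁ < P.x j} =
      {j | a + 1 ≤ j ∧ j ≤ k ∧ y₂ < P.x j} := by
    ext j
    simp only [Set.mem_setOf_eq]
    constructor
    · rintro ⟨h1, h2, h3⟩; exact ⟨h1, h2, (hiff j (h2.trans hk)).mp h3⟩
    · rintro ⟨h1, h2, h3⟩; exact ⟨h1, h2, (hiff j (h2.trans hk)).mpr h3⟩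
  rw [DPath.cR, hset, DPath.cR]

lemma cL_top (P : DPath) {b k : ℕ} {y : ℝ} (hb : b ≤ P.n) (hyb : y ≤ P.x b) :
    P.cL b y k = P.cL P.n y k := by
  have hset : {j | k + 1 ≤ j ∧ j ≤ b ∧ P.x (j - 1) < y} =
      {j | k + 1 ≤ j ∧ j ≤ P.n ∧ P.x (j - 1) < y} := by
    ext j
    simp only [Set.mem_setOf_eq]
    constructor
    · rintro ⟨h1, h2, h3⟩; exact ⟨h1, h2.trans hb, h3⟩
    · rintro ⟨h1, h2, h3⟩
      refine ⟨h1, ?_, h3⟩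
      by_contra hc
      push_neg at hc
      have : P.x b ≤ P.x (j - 1) := P.x_le (by omega) (by omega)
      linarith
  rw [DPath.cL, hset, DPath.cL]

/-! ### Monotonicity and shift lemmas for ThetaL / ThetaR -/

lemma thetaL_mono (P : DPath) {a b : ℕ} {y₁ y₂ : ℝ} (hb : b ≤ P.n)
    (h1b : y₁ ≤ P.x b) (h12 : y₁ ≤ y₂) : ThetaL P a b y₁ ≤ ThetaL P a b y₂ := by
  apply thetaL_le P (thetaL_nonneg P a b y₂)
  intro k h1 h2 h3 h4
  have hkb : k < b := P.lt_of_x_lt (h2.trans hb) hb (lt_of_lt_of_le h3 h1b)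
  obtain ⟨hc1, hc2⟩ := cL_bounds P hb hkb h3 h12
  calc (y₁ - P.x k) * P.τ + (⌈(P.W a k : ℝ) / (P.cL b y₁ k : ℝ)⌉ : ℝ) - 1
      ≤ (y₂ - P.x k) * P.τ + (⌈(P.W a k : ℝ) / (P.cL b y₂ k : ℝ)⌉ : ℝ) - 1 := by
        have hterm := ceil_div_le_ceil_div (W := P.W a k) hc1 hc2
        have hmul : (y₁ - P.x k) * P.τ ≤ (y₂ - P.x k) * P.τ :=
          mul_le_mul_of_nonneg_right (by linarith) (le_of_lt P.hτ)
        linarith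
    _ ≤ ThetaL P a b y₂ := thetaL_term_le P h1 h2 (lt_of_lt_of_le h3 h12) h4

lemma thetaR_anti (P : DPath) {a b : ℕ} {y₁ y₂ : ℝ} (hb : b ≤ P.n)
    (hay : P.x a ≤ y₁) (h12 : y₁ ≤ y₂) : ThetaR P a b y₂ ≤ ThetaR P a b y₁ := by
  apply thetaR_le P (thetaR_nonneg P a b y₁)
  intro k h1 h2 h3 h4
  have hak : a < k := P.lt_of_x_lt (le_trans (le_trans h1 h2) hb) (h2.trans hb)
    (lt_of_le_of_lt (hay.trans h12) h3)
  obtain ⟨hc1, hc2⟩ := cR_bounds P (h2.trans hb) hak h12 h3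
  calc (P.x k - y₂) * P.τ + (⌈(P.W k b : ℝ) / (P.cR a y₂ k : ℝ)⌉ : ℝ) - 1
      ≤ (P.x k - y₁) * P.τ + (⌈(P.W k b : ℝ) / (P.cR a y₁ k : ℝ)⌉ : ℝ) - 1 := by
        have hterm := ceil_div_le_ceil_div (W := P.W k b) hc1 hc2
        have hmul : (P.x k - y₂) * P.τ ≤ (P.x k - y₁) * P.τ :=
          mul_le_mul_of_nonneg_right (by linarith) (le_of_lt P.hτ)
        linarith
    _ ≤ ThetaR P a b y₁ := thetaR_term_le P h1 h2 (lt_of_le_of_lt h12 h3) h4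

lemma thetaL_shift (P : DPath) {a b : ℕ} {y₁ y₂ : ℝ} (hb : b ≤ P.n) (h12 : y₁ ≤ y₂)
    (hiff : ∀ m, m ≤ P.n → (P.x m < y₁ ↔ P.x m < y₂)) :
    ThetaL P a b y₂ ≤ ThetaL P a b y₁ + (y₂ - y₁) * P.τ := by
  have hshift : 0 ≤ (y₂ - y₁) * P.τ := mul_nonneg (by linarith) (le_of_lt P.hτ)
  apply thetaL_le P (by linarith [thetaL_nonneg P a b y₁])
  intro k h1 h2 h3 h4
  have h3' : P.x k < y₁ := (hiff k (h2.trans hb)).mpr h3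
  have hcL : P.cL b y₂ k = P.cL b y₁ k :=
    cL_congr P hb (fun m hm => (hiff m hm).symm)
  rw [hcL]
  have := thetaL_term_le P (b := b) h1 h2 h3' h4
  have : (y₂ - P.x k) * P.τ = (y₁ - P.x k) * P.τ + (y₂ - y₁) * P.τ := by ring
  linarith [thetaL_term_le P (b := b) h1 h2 h3' h4]

lemma thetaR_shift (P : DPath) {a b : ℕ} {y₁ y₂ : ℝ} (hb : b ≤ P.n) (h12 : y₁ ≤ y₂)
    (hiff : ∀ m, m ≤ P.n → (y₁ < P.x m ↔ y₂ < P.x m)) :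
    ThetaR P a b y₁ ≤ ThetaR P a b y₂ + (y₂ - y₁) * P.τ := by
  have hshift : 0 ≤ (y₂ - y₁) * P.τ := mul_nonneg (by linarith) (le_of_lt P.hτ)
  apply thetaR_le P (by linarith [thetaR_nonneg P a b y₂])
  intro k h1 h2 h3 h4
  have h3' : y₂ < P.x k := (hiff k (h2.trans hb)).mp h3
  have hcR : P.cR a y₁ k = P.cR a y₂ k := cR_congr P (h2.trans hb) hiff
  rw [hcR]
  have heq : (P.x k - y₁) * P.τ = (P.x k - y₂) * P.τ + (y₂ - y₁) * P.τ := by ring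
  linarith [thetaR_term_le P (a := a) h1 h2 h3' h4]

lemma thetaL_top (P : DPath) {a b : ℕ} {y : ℝ} (hb : b ≤ P.n) (hyb : y ≤ P.x b) :
    ThetaL P a b y = ThetaL P a P.n y := by
  unfold ThetaL
  congr 1
  ext t
  simp only [Set.mem_insert_iff, Set.mem_setOf_eq]
  constructor
  · rintro (rfl | ⟨k, h1, h2, h3, h4, rfl⟩)
    · exact Or.inl rfl
    · exact Or.inr ⟨k, h1, h2.trans hb, h3, h4, by rw [cL_top P hb hyb]⟩
  · rintro (rfl | ⟨k, h1, h2, h3, h4, rfl⟩)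
    · exact Or.inl rfl
    · have hkb : k ≤ b :=
        le_of_lt (P.lt_of_x_lt h2 hb (lt_of_lt_of_le h3 hyb))
      exact Or.inr ⟨k, h1, hkb, h3, h4, by rw [cL_top P hb hyb]⟩

/-! ### Gap lemmas -/

lemma gap_above (P : DPath) (y : ℝ) :
    ∃ η > (0:ℝ), ∀ m, m ≤ P.n → y < P.x m → y + η ≤ P.x m := by
  classical
  set s := (Finset.range (P.n + 1)).filter (fun m => y < P.x m) with hs
  by_cases hne : s.Nonempty
  · refine ⟨s.inf' hne (fun m => P.x m - y), ?_, ?_⟩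
    · rw [gt_iff_lt, Finset.lt_inf'_iff]
      intro m hm
      have : y < P.x m := by
        simp only [hs, Finset.mem_filter] at hm
        exact hm.2
      linarith
    · intro m hm hym
      have hmem : m ∈ s := by
        simp only [hs, Finset.mem_filter, Finset.mem_range]
        exact ⟨by omega, hym⟩
      have := Finset.inf'_le (fun m => P.x m - y) hmem
      linarith
  · refine ⟨1, one_pos, ?_⟩
    intro m hm hym
    exact absurd (Finset.filter_nonempty_iff.mpr ⟨m, Finset.mem_range.mpr (by omega), hym⟩ : s.Nonempty) hne

lemma gap_below (P : DPath) (y : ℝ) :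
    ∃ η > (0:ℝ), ∀ m, m ≤ P.n → P.x m < y → P.x m ≤ y - η := by
  classical
  set s := (Finset.range (P.n + 1)).filter (fun m => P.x m < y) with hs
  by_cases hne : s.Nonempty
  · refine ⟨s.inf' hne (fun m => y - P.x m), ?_, ?_⟩
    · rw [gt_iff_lt, Finset.lt_inf'_iff]
      intro m hm
      have : P.x m < y := by
        simp only [hs, Finset.mem_filter] at hm
        exact hm.2
      linarith
    · intro m hm hym
      have hmem : m ∈ s := by
        simp only [hs, Finset.mem_filter, Finset.mem_range]
        exact ⟨by omega, hym⟩
      have := Finset.inf'_le (fun m => y - P.x m) hmem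
      linarith
  · refine ⟨1, one_pos, ?_⟩
    intro m hm hym
    exact absurd (Finset.filter_nonempty_iff.mpr ⟨m, Finset.mem_range.mpr (by omega), hym⟩ : s.Nonempty) hne

/-! ### Theta1 lemmas -/

lemma theta_nonneg (P : DPath) (a b : ℕ) (y : ℝ) : 0 ≤ Theta P a b y :=
  le_trans (thetaL_nonneg P a b y) (le_max_left _ _)

lemma theta1_le (P : DPath) {a b : ℕ} {y : ℝ} (hy : y ∈ Set.Icc (P.x a) (P.x b)) :
    Theta1 P a b ≤ Theta P a b y := by
  apply csInf_le
  · refine ⟨0, ?_⟩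
    rintro t ⟨y', _, rfl⟩
    exact theta_nonneg P a b y'
  · exact Set.mem_image_of_mem _ hy

lemma le_theta1 (P : DPath) {a b : ℕ} {L : ℝ} (hab : P.x a ≤ P.x b)
    (h : ∀ y ∈ Set.Icc (P.x a) (P.x b), L ≤ Theta P a b y) : L ≤ Theta1 P a b := by
  apply le_csInf
  · exact ⟨Theta P a b (P.x a), Set.mem_image_of_mem _ ⟨le_refl _, hab⟩⟩
  · rintro t ⟨y, hy, rfl⟩
    exact h y hy

end AuxStmt13

/-- the set `{ x ∈ [x_i, x_n] : Θ_L(P_{i,n},x) ≤ α }` contains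
`x_i` and has a maximum `x*`; if `J = { j : i ≤ j ≤ n, x* ≤ x_j,
Θ_R(P_{i,j},x*) ≤ α }` is nonempty with maximum `j*`, then
`j* = max { j : i ≤ j ≤ n, Θ¹(P_{i,j}) ≤ α }` and `Θ(P_{i,j*},x*) ≤ α`. -/
theorem stmt13 (P : DPath) (α : ℝ) (hα : 0 ≤ α) (i : ℕ) (hi : i ≤ P.n) :
    -- the set contains x_i
    (P.x i ∈ Set.Icc (P.x i) (P.x P.n) ∧ ThetaL P i P.n (P.x i) ≤ α) ∧
    -- and has a maximum element
    (∃ xs, (xs ∈ Set.Icc (P.x i) (P.x P.n) ∧ ThetaL P i P.n xs ≤ α) ∧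
      ∀ y ∈ Set.Icc (P.x i) (P.x P.n), ThetaL P i P.n y ≤ α → y ≤ xs) ∧
    -- for x* this maximum and j* = max J (J assumed nonempty):
    (∀ xs, (xs ∈ Set.Icc (P.x i) (P.x P.n) ∧ ThetaL P i P.n xs ≤ α) →
      (∀ y ∈ Set.Icc (P.x i) (P.x P.n), ThetaL P i P.n y ≤ α → y ≤ xs) →
      ∀ js, (i ≤ js ∧ js ≤ P.n ∧ xs ≤ P.x js ∧ ThetaR P i js xs ≤ α) →
        (∀ j, i ≤ j → j ≤ P.n → xs ≤ P.x j → ThetaR P i j xs ≤ α → j ≤ js) →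
        ((i ≤ js ∧ js ≤ P.n ∧ Theta1 P i js ≤ α) ∧
         (∀ j, i ≤ j → j ≤ P.n → Theta1 P i j ≤ α → j ≤ js) ∧
         Theta P i js xs ≤ α)) := by
  have hxin : P.x i ≤ P.x P.n := P.x_le hi le_rfl
  have part1 : P.x i ∈ Set.Icc (P.x i) (P.x P.n) ∧ ThetaL P i P.n (P.x i) ≤ α := by
    refine ⟨⟨le_refl _, hxin⟩, ?_⟩
    apply thetaL_le P hα
    intro k h1 h2 h3 _
    exact absurd (P.x_le h1 h2) (not_le.mpr h3)
  refine ⟨part1, ?_, ?_⟩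
  · -- part 2: existence of a maximum
    set S : Set ℝ := {y | y ∈ Set.Icc (P.x i) (P.x P.n) ∧ ThetaL P i P.n y ≤ α} with hS
    have hSmem : ∀ y, y ∈ S ↔ (y ∈ Set.Icc (P.x i) (P.x P.n) ∧ ThetaL P i P.n y ≤ α) := by
      intro y; rw [hS]; simp only [Set.mem_setOf_eq]
    have hSne : S.Nonempty := ⟨P.x i, (hSmem _).mpr part1⟩
    have hSbdd : BddAbove S := ⟨P.x P.n, fun y hy => ((hSmem _).mp hy).1.2⟩
    set xs := sSup S with hxs
    have hub : ∀ y ∈ S, y ≤ xs := fun y hy => le_csSup hSbdd hy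
    have hxs1 : P.x i ≤ xs := hub _ ((hSmem _).mpr part1)
    have hxs2 : xs ≤ P.x P.n := csSup_le hSne (fun y hy => ((hSmem _).mp hy).1.2)
    have hTLxs : ThetaL P i P.n xs ≤ α := by
      apply le_of_forall_pos_le_add
      intro ε hε
      obtain ⟨η, hη, hgap⟩ := gap_below P xs
      have hτpos := P.hτ
      set η' := min η (ε / P.τ) with hη'def
      have hη'pos : 0 < η' := lt_min hη (by positivity)
      obtain ⟨y, hyS, hy⟩ := exists_lt_of_lt_csSup hSne (by linarith : xs - η' < xs)
      have hyxs : y ≤ xs := hub y hyS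
      have hiffl : ∀ m, m ≤ P.n → (P.x m < y ↔ P.x m < xs) := by
        intro m hm
        constructor
        · intro h; exact lt_of_lt_of_le h hyxs
        · intro h
          have := hgap m hm h
          have hηη' : η' ≤ η := min_le_left _ _
          linarith
      have hshift := thetaL_shift P (a := i) le_rfl hyxs hiffl
      have hmul : (xs - y) * P.τ ≤ ε := by
        have h1 : xs - y ≤ η' := by linarith
        have h2 : η' ≤ ε / P.τ := min_le_right _ _
        calc (xs - y) * P.τ ≤ (ε / P.τ) * P.τ :=
              mul_le_mul_of_nonneg_right (by linarith) (le_of_lt hτpos)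
          _ = ε := div_mul_cancel₀ _ (ne_of_gt hτpos)
      linarith [((hSmem _).mp hyS).2]
    exact ⟨xs, ⟨⟨hxs1, hxs2⟩, hTLxs⟩, fun y hy hTy => hub y ((hSmem _).mpr ⟨hy, hTy⟩)⟩
  · -- part 3
    rintro xs ⟨⟨hixs, hxsn⟩, hTL⟩ hmax js ⟨hijs, hjsn, hxsjs, hTR⟩ hjmax
    have hTLjs : ThetaL P i js xs ≤ α := by
      rw [thetaL_top P hjsn hxsjs]; exact hTL
    have hTheta : Theta P i js xs ≤ α := max_le hTLjs hTR
    have hT1 : Theta1 P i js ≤ α := le_trans (theta1_le P ⟨hixs, hxsjs⟩) hTheta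
    refine ⟨⟨hijs, hjsn, hT1⟩, ?_, hTheta⟩
    intro j hij hjn hT1j
    by_contra hc
    push_neg at hc
    have hxsj : xs ≤ P.x j := le_trans hxsjs (P.x_le (le_of_lt hc) hjn)
    have hβ : α < ThetaR P i j xs := by
      by_contra hb
      push_neg at hb
      exact absurd (hjmax j hij hjn hxsj hb) (by omega)
    set β := ThetaR P i j xs with hβdef
    obtain ⟨η, hη, hgap⟩ := gap_above P xs
    have hτpos := P.hτ
    set η' := min (η / 2) ((β - α) / (2 * P.τ)) with hη'def
    have hη'pos : 0 < η' := lt_min (by linarith) (div_pos (by linarith) (by linarith))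
    have hη'η : η' ≤ η / 2 := min_le_left _ _
    have hη'τ : η' * P.τ ≤ (β - α) / 2 := by
      have h2 : η' ≤ (β - α) / (2 * P.τ) := min_le_right _ _
      calc η' * P.τ ≤ ((β - α) / (2 * P.τ)) * P.τ :=
            mul_le_mul_of_nonneg_right h2 (le_of_lt hτpos)
        _ = (β - α) / 2 := by
            field_simp
    have hreg12 : ∀ y ∈ Set.Icc (P.x i) (P.x j), y ≤ xs + η' →
        β - η' * P.τ ≤ Theta P i j y := by
      rintro y ⟨hy1, hy2⟩ hy3
      rcases le_or_gt y xs with h | h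
      · have hanti : ThetaR P i j xs ≤ ThetaR P i j y := thetaR_anti P hjn hy1 h
        have h0 : 0 ≤ η' * P.τ := le_of_lt (by positivity)
        have : β - η' * P.τ ≤ ThetaR P i j y := by linarith
        exact le_trans this (le_max_right _ _)
      · have hiffr : ∀ m, m ≤ P.n → (xs < P.x m ↔ y < P.x m) := by
          intro m hm
          constructor
          · intro hlt
            have := hgap m hm hlt
            linarith
          · intro hlt; linarith
        have hshift := thetaR_shift P (a := i) hjn (le_of_lt h) hiffr
        have hmul : (y - xs) * P.τ ≤ η' * P.τ :=
          mul_le_mul_of_nonneg_right (by linarith) (le_of_lt hτpos)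
        have : β - η' * P.τ ≤ ThetaR P i j y := by linarith
        exact le_trans this (le_max_right _ _)
    have hxij : P.x i ≤ P.x j := P.x_le hij hjn
    by_cases hcase : xs + η' ≤ P.x P.n
    · set γ := ThetaL P i P.n (xs + η') with hγdef
      have hγ : α < γ := by
        by_contra hg
        push_neg at hg
        have := hmax (xs + η') ⟨by linarith, hcase⟩ hg
        linarith
      have hL : α < min (β - η' * P.τ) γ := lt_min (by linarith) hγ
      have hbound : ∀ y ∈ Set.Icc (P.x i) (P.x j),
          min (β - η' * P.τ) γ ≤ Theta P i j y := by
        intro y hy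
        rcases le_or_gt y (xs + η') with h | h
        · exact le_trans (min_le_left _ _) (hreg12 y hy h)
        · refine le_trans (min_le_right _ _) ?_
          have hTLy : ThetaL P i j y = ThetaL P i P.n y := thetaL_top P hjn hy.2
          have hmono := thetaL_mono P (a := i) (b := P.n) le_rfl hcase (le_of_lt h)
          calc γ ≤ ThetaL P i P.n y := hmono
            _ = ThetaL P i j y := hTLy.symm
            _ ≤ Theta P i j y := le_max_left _ _
      have := le_theta1 P hxij hbound
      linarith
    · push_neg at hcase
      have hbound : ∀ y ∈ Set.Icc (P.x i) (P.x j), β - η' * P.τ ≤ Theta P i j y := by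
        intro y hy
        apply hreg12 y hy
        have : y ≤ P.x P.n := le_trans hy.2 (P.x_le hjn le_rfl)
        linarith
      have := le_theta1 P hxij hbound
      linarith
end
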